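/- Let Λ be a finite type of glue labels with card Λ = u, let T be a finite set of tile types t : Fin 4 → Λ, and let g : Λ → ℕ and τ ∈ ℕ with τ ≥ 1. Then there exist a strength function g' : Λ → ℕ and a temperature τ' ∈ ℕ with 1 ≤ τ' ≤ 2^(6u+6) such that for every tile type t ∈ T, D_{g',τ'}(t) = D_{g,τ}(t), i.e., the new strengths and temperature are locally equivalent to the original ones. -/

import Mathlib

open Finset Module Matrix

namespace LocTemp

variable {ι : Type} [Fintype ι] [DecidableEq ι]

/-- Feasibility for a finite system of constraints `c.2 ≤ c.1 ⬝ᵥ z`. -/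
def Feas (Cs : Finset ((ι → ℚ) × ℚ)) (z : ι → ℚ) : Prop := ∀ c ∈ Cs, c.2 ≤ c.1 ⬝ᵥ z

/-- The set of rows of constraints tight at `z`. -/
def tightRows (Cs : Finset ((ι → ℚ) × ℚ)) (z : ι → ℚ) : Set (ι → ℚ) :=
  {a | ∃ r, (a, r) ∈ Cs ∧ a ⬝ᵥ z = r}

lemma dot_add_smul (a z d : ι → ℚ) (t : ℚ) :
    a ⬝ᵥ (z + t • d) = a ⬝ᵥ z + t * (a ⬝ᵥ d) := by
  rw [dotProduct_add, dotProduct_smul, smul_eq_mul]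

lemma step (Cs : Finset ((ι → ℚ) × ℚ))
    (hbl : ∀ i : ι, (Pi.single i (1:ℚ), (0:ℚ)) ∈ Cs)
    (hbu : ∀ i : ι, (-Pi.single i (1:ℚ), (-1:ℚ)) ∈ Cs)
    {z : ι → ℚ} (hz : Feas Cs z) {d : ι → ℚ} (hd : d ≠ 0)
    (horth : ∀ a ∈ tightRows Cs z, a ⬝ᵥ d = 0) :
    ∃ t : ℚ, 0 ≤ t ∧ Feas Cs (z + t • d) ∧
      (∀ a ∈ tightRows Cs z, a ∈ tightRows Cs (z + t • d)) ∧
      ∃ a ∈ tightRows Cs (z + t • d), a ⬝ᵥ d < 0 := by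
  classical
  set Neg := Cs.filter (fun c => c.1 ⬝ᵥ d < 0) with hNeg
  have hne : Neg.Nonempty := by
    obtain ⟨i, hi⟩ := Function.ne_iff.mp hd
    rcases lt_or_gt_of_ne hi with h | h
    · exact ⟨_, Finset.mem_filter.mpr ⟨hbl i, by simpa [single_dotProduct] using h⟩⟩
    · refine ⟨_, Finset.mem_filter.mpr ⟨hbu i, ?_⟩⟩
      simpa [neg_dotProduct, single_dotProduct] using h
  set t := Neg.inf' hne (fun c => (c.1 ⬝ᵥ z - c.2) / (-(c.1 ⬝ᵥ d))) with ht
  have hmemNeg : ∀ c ∈ Neg, c ∈ Cs ∧ c.1 ⬝ᵥ d < 0 := fun c hc => Finset.mem_filter.mp hc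
  have ht0 : 0 ≤ t := by
    refine Finset.le_inf' hne _ fun c hc => ?_
    obtain ⟨hcC, hcd⟩ := hmemNeg c hc
    exact div_nonneg (sub_nonneg.mpr (hz c hcC)) (by linarith)
  refine ⟨t, ht0, ?_, ?_, ?_⟩
  · intro c hc
    rw [dot_add_smul]
    by_cases h : c.1 ⬝ᵥ d < 0
    · have hcNeg : c ∈ Neg := Finset.mem_filter.mpr ⟨hc, h⟩
      have := Finset.inf'_le (fun c => (c.1 ⬝ᵥ z - c.2) / (-(c.1 ⬝ᵥ d))) hcNeg
      rw [← ht] at this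
      have hpos : 0 < -(c.1 ⬝ᵥ d) := by linarith
      rw [le_div_iff₀ hpos] at this
      nlinarith
    · push_neg at h
      have := hz c hc
      nlinarith
  · intro a ha
    obtain ⟨r, hmem, hr⟩ := ha
    exact ⟨r, hmem, by rw [dot_add_smul, horth a ⟨r, hmem, hr⟩, hr, mul_zero, add_zero]⟩
  · obtain ⟨c, hcNeg, hct⟩ := Finset.exists_mem_eq_inf' hne
      (fun c => (c.1 ⬝ᵥ z - c.2) / (-(c.1 ⬝ᵥ d)))
    obtain ⟨hcC, hcd⟩ := hmemNeg c hcNeg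
    refine ⟨c.1, ⟨c.2, hcC, ?_⟩, hcd⟩
    rw [dot_add_smul, ← ht] at *
    rw [hct]
    have hne0 : c.1 ⬝ᵥ d ≠ 0 := ne_of_lt hcd
    field_simp
    ring_nf


lemma dual_eq_dot (f : Module.Dual ℚ (ι → ℚ)) (a : ι → ℚ) :
    f a = a ⬝ᵥ (fun i => f (Pi.single i 1)) := by
  conv_lhs => rw [← Finset.univ_sum_single a]
  rw [map_sum, dotProduct]
  refine Finset.sum_congr rfl fun i _ => ?_
  have h1 : (Pi.single i (a i) : ι → ℚ) = a i • ((Pi.single i (1:ℚ)) : ι → ℚ) := by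
    ext j
    by_cases h : j = i <;> simp [Pi.single_apply, h]
  rw [h1, _root_.map_smul, smul_eq_mul]

lemma exists_tight_span (Cs : Finset ((ι → ℚ) × ℚ))
    (hbl : ∀ i : ι, (Pi.single i (1:ℚ), (0:ℚ)) ∈ Cs)
    (hbu : ∀ i : ι, (-Pi.single i (1:ℚ), (-1:ℚ)) ∈ Cs)
    (obj : ι) {z₀ : ι → ℚ} (hz₀ : Feas Cs z₀) :
    ∃ z : ι → ℚ, Feas Cs z ∧ z₀ obj ≤ z obj ∧
      Submodule.span ℚ (tightRows Cs z) = ⊤ := by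
  classical
  suffices H : ∀ k : ℕ, ∀ z : ι → ℚ, Feas Cs z →
      Fintype.card ι ≤ k + finrank ℚ (Submodule.span ℚ (tightRows Cs z)) →
      ∃ z', Feas Cs z' ∧ z obj ≤ z' obj ∧
        Submodule.span ℚ (tightRows Cs z') = ⊤ by
    exact H (Fintype.card ι) z₀ hz₀ (by omega)
  intro k
  induction k with
  | zero =>
    intro z hz hk
    refine ⟨z, hz, le_rfl, ?_⟩
    apply Submodule.eq_top_of_finrank_eq
    have h1 : finrank ℚ (ι → ℚ) = Fintype.card ι := Module.finrank_pi ℚ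
    have h2 := Submodule.finrank_le (Submodule.span ℚ (tightRows Cs z))
    omega
  | succ k ih =>
    intro z hz hk
    by_cases htop : Submodule.span ℚ (tightRows Cs z) = ⊤
    · exact ⟨z, hz, le_rfl, htop⟩
    · obtain ⟨f, hf0, hfmap⟩ := Submodule.exists_dual_map_eq_bot_of_lt_top
        (p := Submodule.span ℚ (tightRows Cs z)) (lt_top_iff_ne_top.mpr htop)
        inferInstance
      have hker : ∀ x ∈ Submodule.span ℚ (tightRows Cs z), f x = 0 := by
        intro x hx
        have : f x ∈ (Submodule.span ℚ (tightRows Cs z)).map f :=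
          Submodule.mem_map_of_mem hx
        rw [hfmap] at this
        exact (Submodule.mem_bot ℚ).mp this
      set d0 : ι → ℚ := fun i => f (Pi.single i 1) with hd0def
      have hfd : ∀ a : ι → ℚ, f a = a ⬝ᵥ d0 := fun a => dual_eq_dot f a
      have hd0 : d0 ≠ 0 := by
        intro h
        apply hf0
        apply LinearMap.ext
        intro a
        rw [hfd a, h]
        simp
      set s : ℚ := if 0 ≤ d0 obj then 1 else -1 with hs
      have hs0 : s ≠ 0 := by
        rw [hs]; split <;> norm_num
      set d : ι → ℚ := s • d0 with hdd
      have hdot : ∀ a : ι → ℚ, a ⬝ᵥ d = s * f a := by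
        intro a; rw [hdd, dotProduct_smul, smul_eq_mul, hfd]
      have hd : d ≠ 0 := smul_ne_zero hs0 hd0
      have hdobj : 0 ≤ d obj := by
        have : d obj = s * d0 obj := by rw [hdd]; simp [smul_eq_mul]
        rw [this, hs]
        split
        · simpa
        · rename_i h; push_neg at h; nlinarith
      have horth : ∀ a ∈ tightRows Cs z, a ⬝ᵥ d = 0 := by
        intro a ha
        rw [hdot, hker a (Submodule.subset_span ha), mul_zero]
      obtain ⟨t, ht0, hfeas, htight, a, haS', had⟩ := step Cs hbl hbu hz hd horth
      have hnotmem : a ∉ Submodule.span ℚ (tightRows Cs z) := by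
        intro hmem
        rw [hdot, hker a hmem, mul_zero] at had
        exact lt_irrefl _ had
      have hlt : Submodule.span ℚ (tightRows Cs z) <
          Submodule.span ℚ (tightRows Cs (z + t • d)) := by
        refine lt_of_le_of_ne (Submodule.span_mono htight) fun h => hnotmem ?_
        rw [h]
        exact Submodule.subset_span haS'
      have hrank := Submodule.finrank_lt_finrank_of_lt hlt
      obtain ⟨z', hz', hobj', hspan'⟩ := ih (z + t • d) hfeas (by omega)
      refine ⟨z', hz', le_trans ?_ hobj', hspan'⟩
      have : (z + t • d) obj = z obj + t * d obj := by simp [smul_eq_mul]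
      rw [this]
      nlinarith [mul_nonneg ht0 hdobj]


/-- Column-sum bound on the determinant of an integer matrix. -/
lemma abs_det_le_prod_colsum (A : Matrix ι ι ℤ) :
    |A.det| ≤ ∏ i, ∑ j, |A j i| := by
  classical
  rw [Matrix.det_apply]
  calc |∑ σ : Equiv.Perm ι, Equiv.Perm.sign σ • ∏ i, A (σ i) i|
      ≤ ∑ σ : Equiv.Perm ι, |Equiv.Perm.sign σ • ∏ i, A (σ i) i| :=
        Finset.abs_sum_le_sum_abs _ _
    _ = ∑ σ : Equiv.Perm ι, ∏ i, |A (σ i) i| := by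
        refine Finset.sum_congr rfl fun σ _ => ?_
        rcases Int.units_eq_one_or (Equiv.Perm.sign σ) with h | h <;>
          simp [h, Finset.abs_prod]
    _ ≤ ∑ g : ι → ι, ∏ i, |A (g i) i| := by
        set F : Equiv.Perm ι → (ι → ι) := fun σ i => σ i with hF
        have hinj : ∀ x ∈ (Finset.univ : Finset (Equiv.Perm ι)), ∀ y ∈ Finset.univ,
            F x = F y → x = y := by
          intro x _ y _ h
          exact Equiv.ext fun i => congrFun h i
        have himg := Finset.sum_image (g := F) (f := fun h : ι → ι => ∏ i, |A (h i) i|) hinj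
        rw [show (∑ σ : Equiv.Perm ι, ∏ i, |A (σ i) i|) =
            ∑ g ∈ Finset.univ.image F, ∏ i, |A (g i) i| from himg.symm]
        refine Finset.sum_le_sum_of_subset_of_nonneg (Finset.subset_univ _) ?_
        intro g _ _
        exact Finset.prod_nonneg fun i _ => abs_nonneg _
    _ = ∏ i, ∑ j, |A j i| := by
        rw [Finset.prod_univ_sum (t := fun _ : ι => (Finset.univ : Finset ι))
          (f := fun i j => |A j i|), Fintype.piFinset_univ]


lemma opt_sum {Λ : Type} [Fintype Λ] {β : Type*} [AddCommMonoid β] (F : Option Λ → β) :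
    ∑ i, F i = F none + ∑ l, F (some l) := by
  rw [univ_option, Finset.sum_insertNone]

lemma dot_opt {Λ : Type} [Fintype Λ] (F G : Option Λ → ℚ) :
    F ⬝ᵥ G = F none * G none + ∑ l, F (some l) * G (some l) :=
  opt_sum (fun i => F i * G i)

set_option maxHeartbeats 2000000 in
theorem main_aux {Λ : Type} [Fintype Λ] [DecidableEq Λ] (gb : Λ → ℕ) (τ : ℕ)
    (hτ : 1 ≤ τ) (hcap : ∀ l, gb l ≤ τ) :
    ∃ (g' : Λ → ℕ) (q : ℕ), 1 ≤ q ∧ q ≤ 5 ^ (Fintype.card Λ + 1) ∧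
      ∀ m : Λ → ℕ, (∑ l, m l) ≤ 4 →
        ((q ≤ ∑ l, m l * g' l) ↔ (τ ≤ ∑ l, m l * gb l)) := by
  classical
  set ι := Option Λ with hι
  have hτQ : (0:ℚ) < (τ:ℚ) := by exact_mod_cast hτ
  set M : Finset (Λ → ℕ) :=
    (Fintype.piFinset fun _ : Λ => Finset.range 5).filter (fun m => (∑ l, m l) ≤ 4) with hM
  have hMmem : ∀ m : Λ → ℕ, (∑ l, m l) ≤ 4 → m ∈ M := by
    intro m hm
    refine Finset.mem_filter.mpr ⟨Fintype.mem_piFinset.mpr fun l => Finset.mem_range.mpr ?_, hm⟩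
    have : m l ≤ ∑ l', m l' :=
      Finset.single_le_sum (fun _ _ => Nat.zero_le _) (Finset.mem_univ l)
    omega
  have hMsum : ∀ m ∈ M, (∑ l, m l) ≤ 4 := fun m hm => (Finset.mem_filter.mp hm).2
  set rowA : (Λ → ℕ) → (ι → ℚ) := fun m i => i.elim 0 (fun l => (m l : ℚ)) with hrowA
  set rowR : (Λ → ℕ) → (ι → ℚ) := fun m i => i.elim 1 (fun l => (m l : ℚ)) with hrowR
  set Acc : Finset (Λ → ℕ) := M.filter (fun m => τ ≤ ∑ l, m l * gb l) with hAccdef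
  set Rej : Finset (Λ → ℕ) := M.filter (fun m => ¬ τ ≤ ∑ l, m l * gb l) with hRejdef
  set Cs : Finset ((ι → ℚ) × ℚ) :=
    ((Finset.univ.image fun i : ι => (Pi.single i (1:ℚ), (0:ℚ))) ∪
     (Finset.univ.image fun i : ι => (-Pi.single i (1:ℚ), (-1:ℚ)))) ∪
    ((Acc.image fun m => (rowA m, (1:ℚ))) ∪
     (Rej.image fun m => (-rowR m, (-1:ℚ)))) with hCsdef
  have hbl : ∀ i : ι, (Pi.single i (1:ℚ), (0:ℚ)) ∈ Cs := fun i =>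
    Finset.mem_union_left _ (Finset.mem_union_left _
      (Finset.mem_image_of_mem _ (Finset.mem_univ i)))
  have hbu : ∀ i : ι, (-Pi.single i (1:ℚ), (-1:ℚ)) ∈ Cs := fun i =>
    Finset.mem_union_left _ (Finset.mem_union_right _
      (Finset.mem_image_of_mem _ (Finset.mem_univ i)))
  have hCmem : ∀ c ∈ Cs,
      (∃ i : ι, c = (Pi.single i (1:ℚ), (0:ℚ))) ∨
      (∃ i : ι, c = (-Pi.single i (1:ℚ), (-1:ℚ))) ∨
      (∃ m ∈ Acc, c = (rowA m, (1:ℚ))) ∨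
      (∃ m ∈ Rej, c = (-rowR m, (-1:ℚ))) := by
    intro c hc
    rw [hCsdef] at hc
    simp only [Finset.mem_union, Finset.mem_image, Finset.mem_univ, true_and] at hc
    rcases hc with ((⟨i, hi⟩ | ⟨i, hi⟩) | (⟨m, hm, hi⟩ | ⟨m, hm, hi⟩))
    · exact Or.inl ⟨i, hi.symm⟩
    · exact Or.inr (Or.inl ⟨i, hi.symm⟩)
    · exact Or.inr (Or.inr (Or.inl ⟨m, hm, hi.symm⟩))
    · exact Or.inr (Or.inr (Or.inr ⟨m, hm, hi.symm⟩))
  -- the initial feasible point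
  set z₀ : ι → ℚ := fun i => i.elim (1 / (τ:ℚ)) (fun l => (gb l : ℚ) / τ) with hz₀def
  have hz₀ : Feas Cs z₀ := by
    intro c hc
    rcases hCmem c hc with ⟨i, rfl⟩ | ⟨i, rfl⟩ | ⟨m, hm, rfl⟩ | ⟨m, hm, rfl⟩
    · show (0:ℚ) ≤ Pi.single i 1 ⬝ᵥ z₀
      rw [single_dotProduct, one_mul]
      rcases i with _ | l <;> · show (0:ℚ) ≤ _ / _; positivity
    · show (-1:ℚ) ≤ -Pi.single i 1 ⬝ᵥ z₀
      rw [neg_dotProduct, single_dotProduct, one_mul, neg_le_neg_iff]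
      rcases i with _ | l
      · show (1:ℚ)/τ ≤ 1
        rw [div_le_one hτQ]
        exact_mod_cast hτ
      · show ((gb l : ℚ))/τ ≤ 1
        rw [div_le_one hτQ]
        exact_mod_cast hcap l
    · show (1:ℚ) ≤ rowA m ⬝ᵥ z₀
      rw [dot_opt]
      have : ∀ l : Λ, rowA m (some l) * z₀ (some l) = (m l : ℚ) * (gb l : ℚ) / τ := by
        intro l; show (m l : ℚ) * ((gb l : ℚ)/τ) = _; ring
      rw [Finset.sum_congr rfl fun l _ => this l]
      show (1:ℚ) ≤ 0 * _ + ∑ l, (m l : ℚ) * (gb l : ℚ) / τ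
      rw [zero_mul, zero_add, ← Finset.sum_div, le_div_iff₀ hτQ, one_mul]
      have := (Finset.mem_filter.mp hm).2
      push_cast
      exact_mod_cast this
    · show (-1:ℚ) ≤ -rowR m ⬝ᵥ z₀
      rw [neg_dotProduct, neg_le_neg_iff, dot_opt]
      have : ∀ l : Λ, rowR m (some l) * z₀ (some l) = (m l : ℚ) * (gb l : ℚ) / τ := by
        intro l; show (m l : ℚ) * ((gb l : ℚ)/τ) = _; ring
      rw [Finset.sum_congr rfl fun l _ => this l]
      show (1:ℚ) * ((1:ℚ)/τ) + ∑ l, (m l : ℚ) * (gb l : ℚ) / τ ≤ 1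
      rw [one_mul, ← Finset.sum_div, ← add_div, div_le_one hτQ]
      have hlt := (Finset.mem_filter.mp hm).2
      have hlt' : 1 + (∑ l, m l * gb l) ≤ τ := by omega
      push_cast
      exact_mod_cast hlt'
  obtain ⟨z, hfeas, hobj, hspan⟩ := exists_tight_span Cs hbl hbu none hz₀
  have hz_nonneg : ∀ i : ι, 0 ≤ z i := by
    intro i
    have := hfeas _ (hbl i)
    rwa [single_dotProduct, one_mul] at this
  have hz_le1 : ∀ i : ι, z i ≤ 1 := by
    intro i
    have := hfeas _ (hbu i)
    rw [neg_dotProduct, single_dotProduct, one_mul, neg_le_neg_iff] at this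
    exact this
  have hz_none : 1 / (τ:ℚ) ≤ z none := hobj
  -- integrality data for tight rows
  have hdata : ∀ a ∈ tightRows Cs z, ∃ (a₀ : ι → ℤ) (r₀ : ℤ),
      (∀ j, a j = (a₀ j : ℚ)) ∧ (∑ j, |a₀ j|) ≤ 5 ∧ a ⬝ᵥ z = (r₀ : ℚ) := by
    rintro a ⟨r, hmem, hr⟩
    rcases hCmem _ hmem with ⟨i, hc⟩ | ⟨i, hc⟩ | ⟨m, hm, hc⟩ | ⟨m, hm, hc⟩ <;>
      simp only [Prod.mk.injEq] at hc <;> obtain ⟨ha, hrr⟩ := hc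
    · refine ⟨(Pi.single i 1 : ι → ℤ), 0, ?_, ?_, by rw [hr, hrr]; norm_num⟩
      · intro j
        rw [ha]
        by_cases h : j = i <;> simp [Pi.single_apply, h]
      · have : ∀ j, |(Pi.single i 1 : ι → ℤ) j| = (Pi.single i 1 : ι → ℤ) j := by
          intro j; by_cases h : j = i <;> simp [Pi.single_apply, h]
        rw [Finset.sum_congr rfl fun j _ => this j, Finset.sum_pi_single']
        simp
    · refine ⟨-(Pi.single i 1 : ι → ℤ), -1, ?_, ?_, by rw [hr, hrr]; norm_num⟩
      · intro j
        rw [ha]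
        by_cases h : j = i <;> simp [Pi.single_apply, h]
      · have : ∀ j, |(-(Pi.single i 1 : ι → ℤ)) j| = (Pi.single i 1 : ι → ℤ) j := by
          intro j; by_cases h : j = i <;> simp [Pi.single_apply, h]
        rw [Finset.sum_congr rfl fun j _ => this j, Finset.sum_pi_single']
        simp
    · refine ⟨fun j => j.elim 0 (fun l => (m l : ℤ)), 1, ?_, ?_, by rw [hr, hrr]; norm_num⟩
      · intro j
        rw [ha]
        rcases j with _ | l <;> simp [hrowA]
      · rw [opt_sum (fun j => |(fun j : ι => j.elim 0 (fun l => (m l : ℤ))) j|)]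
        have h4 := hMsum m (Finset.mem_filter.mp hm).1
        have : ∀ l : Λ, |((fun j : ι => j.elim 0 (fun l => (m l : ℤ))) (some l))| = (m l : ℤ) := by
          intro l; simp
        rw [Finset.sum_congr rfl fun l _ => this l]
        show |(0:ℤ)| + ∑ l, (m l : ℤ) ≤ 5
        rw [abs_zero, zero_add]
        have : ((∑ l, m l : ℕ) : ℤ) ≤ 4 := by exact_mod_cast h4
        push_cast at this ⊢
        omega
    · refine ⟨fun j => j.elim (-1) (fun l => -(m l : ℤ)), -1, ?_, ?_, by rw [hr, hrr]; norm_num⟩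
      · intro j
        rw [ha]
        rcases j with _ | l <;> simp [hrowR]
      · rw [opt_sum (fun j => |(fun j : ι => j.elim (-1) (fun l => -(m l : ℤ))) j|)]
        have h4 := hMsum m (Finset.mem_filter.mp hm).1
        have : ∀ l : Λ, |((fun j : ι => j.elim (-1) (fun l => -(m l : ℤ))) (some l))| = (m l : ℤ) := by
          intro l; simp
        rw [Finset.sum_congr rfl fun l _ => this l]
        show |(-1:ℤ)| + ∑ l, (m l : ℤ) ≤ 5
        rw [abs_neg, abs_one]
        have : ((∑ l, m l : ℕ) : ℤ) ≤ 4 := by exact_mod_cast h4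
        push_cast at this ⊢
        omega
  -- extract a square invertible integer system from the tight rows
  obtain ⟨sS, hsub, hspan_eq, hli⟩ := exists_linearIndependent ℚ (tightRows Cs z)
  rw [hspan] at hspan_eq
  have htfin : (tightRows Cs z).Finite := by
    refine Set.Finite.subset (Cs.image Prod.fst).finite_toSet ?_
    rintro a ⟨r, hm, -⟩
    exact Finset.mem_coe.mpr (Finset.mem_image_of_mem Prod.fst hm)
  have hsfin : sS.Finite := htfin.subset hsub
  haveI := hsfin.fintype
  have hBtop : ⊤ ≤ Submodule.span ℚ (Set.range ((↑) : sS → (ι → ℚ))) := by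
    rw [Subtype.range_coe, hspan_eq]
  let B : Basis sS ℚ (ι → ℚ) := Basis.mk hli hBtop
  have hcard : Fintype.card sS = Fintype.card ι := by
    have h1 := Module.finrank_eq_card_basis B
    have h2 : finrank ℚ (ι → ℚ) = Fintype.card ι := Module.finrank_pi ℚ
    omega
  let e : ι ≃ sS := Fintype.equivOfCardEq hcard.symm
  have hrows : ∀ i : ι, ∃ (a₀ : ι → ℤ) (r₀ : ℤ),
      (∀ j, (e i : ι → ℚ) j = (a₀ j : ℚ)) ∧ (∑ j, |a₀ j|) ≤ 5 ∧
      ((e i : ι → ℚ)) ⬝ᵥ z = (r₀ : ℚ) := fun i => hdata _ (hsub (e i).2)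
  choose A₀ r₀ hA₀ hL1 hr₀ using hrows
  set AQ : Matrix ι ι ℚ := Matrix.of (fun i j => ((A₀ i j : ℚ))) with hAQdef
  have hAQrow : ∀ i, (fun j => AQ i j) = ((e i : ι → ℚ)) := by
    intro i; funext j; exact (hA₀ i j).symm
  -- determinant is nonzero
  have hdet : AQ.det ≠ 0 := by
    intro h0
    obtain ⟨v, hv, hMv⟩ := (Matrix.exists_mulVec_eq_zero_iff).mpr h0
    apply hv
    set φ : (ι → ℚ) →ₗ[ℚ] ℚ :=
      { toFun := fun a => a ⬝ᵥ v
        map_add' := fun x y => add_dotProduct x y v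
        map_smul' := fun c x => smul_dotProduct c x v } with hφdef
    have hφs : ∀ a ∈ sS, a ⬝ᵥ v = 0 := by
      intro a ha
      have h1 : (e (e.symm ⟨a, ha⟩) : ι → ℚ) = a := by
        rw [Equiv.apply_symm_apply]
      have h2 : AQ.mulVec v (e.symm ⟨a, ha⟩) = 0 := by rw [hMv]; rfl
      have h3 : (fun j => AQ (e.symm ⟨a, ha⟩) j) ⬝ᵥ v = 0 := h2
      rw [hAQrow, h1] at h3
      exact h3
    have hker : ∀ x ∈ Submodule.span ℚ sS, φ x = 0 := by
      intro x hx
      have : Submodule.span ℚ sS ≤ LinearMap.ker φ :=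
        Submodule.span_le.mpr fun a ha => LinearMap.mem_ker.mpr (hφs a ha)
      exact LinearMap.mem_ker.mp (this hx)
    funext j
    have : φ (Pi.single j 1) = 0 := hker _ (by rw [hspan_eq]; trivial)
    have hsingle : φ (Pi.single j 1) = v j := by
      show (Pi.single j 1 : ι → ℚ) ⬝ᵥ v = v j
      rw [single_dotProduct, one_mul]
    rw [hsingle] at this
    exact this
  -- Cramer's rule over the integers
  set A₀m : Matrix ι ι ℤ := Matrix.of A₀ with hA₀mdef
  have hAQmap : (Int.castRingHom ℚ).mapMatrix A₀m = AQ := by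
    ext a b
    simp only [RingHom.mapMatrix_apply, Matrix.map_apply, hAQdef, Matrix.of_apply,
      eq_intCast, Int.cast_inj]
    rfl
  set D : ℤ := A₀m.det with hDdef
  have hDQ : AQ.det = (D : ℚ) := by
    have h2 := RingHom.map_det (Int.castRingHom ℚ) A₀m
    rw [hAQmap] at h2
    exact h2.symm
  have hD0 : D ≠ 0 := fun h => hdet (by rw [hDQ, h, Int.cast_zero])
  have hmulz : AQ.mulVec z = fun i => ((r₀ i : ℚ)) := by
    funext i
    show (fun j => AQ i j) ⬝ᵥ z = _
    rw [hAQrow]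
    exact hr₀ i
  have hkey : (AQ.adjugate).mulVec (AQ.mulVec z) = AQ.det • z := by
    rw [Matrix.mulVec_mulVec, Matrix.adjugate_mul, Matrix.smul_mulVec,
      Matrix.one_mulVec]
  set y : ι → ℤ := (A₀m.adjugate).mulVec r₀ with hydef
  have hadj : ∀ i j, AQ.adjugate i j = ((A₀m.adjugate i j : ℚ)) := by
    intro i j
    have h2 := RingHom.map_adjugate (Int.castRingHom ℚ) A₀m
    rw [hAQmap] at h2
    rw [← h2]
    simp [RingHom.mapMatrix_apply, Matrix.map_apply]
  have hyint : ∀ i, (D : ℚ) * z i = ((y i : ℚ)) := by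
    intro i
    have h1 : (AQ.det • z) i = AQ.det * z i := rfl
    rw [← hDQ, ← h1, ← hkey, hmulz]
    show ∑ j, AQ.adjugate i j * ((r₀ j : ℚ)) = ((y i : ℚ))
    rw [hydef]
    show _ = ((∑ j, A₀m.adjugate i j * r₀ j : ℤ) : ℚ)
    push_cast
    refine Finset.sum_congr rfl fun j _ => ?_
    rw [hadj]
  set q : ℕ := D.natAbs with hqdef
  have hq1 : 1 ≤ q := Int.natAbs_pos.mpr hD0
  obtain ⟨y₁, hqz⟩ : ∃ y₁ : ι → ℤ, ∀ i, ((q:ℚ)) * z i = ((y₁ i : ℚ)) := by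
    rcases le_or_gt 0 D with h | h
    · refine ⟨y, fun i => ?_⟩
      have hq : ((q : ℤ) : ℚ) = (D : ℚ) := by
        rw [hqdef, Int.natAbs_of_nonneg h]
      rw [show ((q:ℕ):ℚ) = ((q:ℤ):ℚ) by push_cast; ring, hq]
      exact hyint i
    · refine ⟨fun i => -(y i), fun i => ?_⟩
      have hq : ((q : ℤ) : ℚ) = -(D : ℚ) := by
        have h9 : ((q:ℤ)) = -D := by rw [hqdef]; omega
        rw [h9]
        push_cast
        ring
      rw [show ((q:ℕ):ℚ) = ((q:ℤ):ℚ) by push_cast; ring, hq]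
      push_cast
      rw [← hyint i]
      ring
  have hy₁nonneg : ∀ i, 0 ≤ y₁ i := by
    intro i
    have h1 : (0:ℚ) ≤ (q:ℚ) * z i :=
      mul_nonneg (by positivity) (hz_nonneg i)
    rw [hqz i] at h1
    exact_mod_cast h1
  have hy₁none : 1 ≤ y₁ none := by
    have hqpos : (0:ℚ) < (q:ℚ) := by exact_mod_cast hq1
    have h1 : (0:ℚ) < (q:ℚ) * z none :=
      mul_pos hqpos (lt_of_lt_of_le (by positivity) hz_none)
    rw [hqz none] at h1
    have : (0:ℤ) < y₁ none := by exact_mod_cast h1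
    omega
  -- bound on q
  have hbound : ((q:ℤ)) ≤ 5 ^ (Fintype.card ι) := by
    have h1 := abs_det_le_prod_colsum (A₀m.transpose)
    rw [Matrix.det_transpose] at h1
    have h1' : |D| ≤ ∏ i : ι, ∑ j, |A₀m i j| := by
      simpa [Matrix.transpose_apply] using h1
    have h3 : ∏ i : ι, (∑ j, |A₀m i j|) ≤ ∏ _i : ι, (5:ℤ) := by
      refine Finset.prod_le_prod
        (fun i _ => Finset.sum_nonneg fun j _ => abs_nonneg _) fun i _ => ?_
      exact hL1 i
    calc ((q:ℤ)) = |D| := by rw [hqdef]; exact (Int.abs_eq_natAbs D).symm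
      _ ≤ ∏ i : ι, ∑ j, |A₀m i j| := h1'
      _ ≤ ∏ _i : ι, (5:ℤ) := h3
      _ = 5 ^ (Fintype.card ι) := by rw [Finset.prod_const, Finset.card_univ]
  have hqbound : q ≤ 5 ^ (Fintype.card Λ + 1) := by
    have hcardι : Fintype.card ι = Fintype.card Λ + 1 := Fintype.card_option
    rw [hcardι] at hbound
    exact_mod_cast hbound
  -- conclusion
  refine ⟨fun l => (y₁ (some l)).toNat, q, hq1, hqbound, ?_⟩
  intro m hm4
  have hmM := hMmem m hm4
  have hg'cast : ∀ l, (((y₁ (some l)).toNat : ℕ) : ℚ) = (q:ℚ) * z (some l) := by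
    intro l
    have h7 : ((y₁ (some l)).toNat : ℤ) = y₁ (some l) :=
      Int.toNat_of_nonneg (hy₁nonneg (some l))
    calc (((y₁ (some l)).toNat : ℕ) : ℚ)
        = ((((y₁ (some l)).toNat : ℕ) : ℤ) : ℚ) := by push_cast; ring
      _ = ((y₁ (some l) : ℤ) : ℚ) := by rw [h7]
      _ = (q:ℚ) * z (some l) := (hqz _).symm
  have hsumcast : ((∑ l, m l * (y₁ (some l)).toNat : ℕ) : ℚ)
      = (q:ℚ) * ∑ l, (m l : ℚ) * z (some l) := by
    push_cast
    rw [Finset.mul_sum]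
    refine Finset.sum_congr rfl fun l _ => ?_
    have h5 := hg'cast l
    push_cast at h5
    rw [h5]
    ring
  by_cases hacc : τ ≤ ∑ l, m l * gb l
  · have hmAcc : m ∈ Acc := by
      rw [hAccdef]
      exact Finset.mem_filter.mpr ⟨hmM, hacc⟩
    have hmem : (rowA m, (1:ℚ)) ∈ Cs := by
      rw [hCsdef]
      exact Finset.mem_union_right _ (Finset.mem_union_left _
        (Finset.mem_image_of_mem _ hmAcc))
    have h1 := hfeas _ hmem
    dsimp only at h1
    rw [dot_opt] at h1
    have hnone : rowA m none = 0 := rfl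
    have hsome : ∀ l : Λ, rowA m (some l) = (m l : ℚ) := fun l => rfl
    rw [hnone, zero_mul, zero_add,
      Finset.sum_congr rfl (fun l _ => by rw [hsome l])] at h1
    refine iff_of_true ?_ hacc
    have h3 : (q:ℚ) ≤ ((∑ l, m l * (y₁ (some l)).toNat : ℕ) : ℚ) := by
      rw [hsumcast]
      have hqnn : (0:ℚ) ≤ (q:ℚ) := by positivity
      nlinarith
    exact_mod_cast h3
  · have hmRej : m ∈ Rej := by
      rw [hRejdef]
      exact Finset.mem_filter.mpr ⟨hmM, hacc⟩
    have hmem : (-rowR m, (-1:ℚ)) ∈ Cs := by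
      rw [hCsdef]
      exact Finset.mem_union_right _ (Finset.mem_union_right _
        (Finset.mem_image_of_mem _ hmRej))
    have h1 := hfeas _ hmem
    dsimp only at h1
    rw [neg_dotProduct, neg_le_neg_iff, dot_opt] at h1
    have hnone : rowR m none = 1 := rfl
    have hsome : ∀ l : Λ, rowR m (some l) = (m l : ℚ) := fun l => rfl
    rw [hnone, one_mul,
      Finset.sum_congr rfl (fun l _ => by rw [hsome l])] at h1
    refine iff_of_false ?_ hacc
    intro hcon
    have h3 : (q:ℚ) ≤ ((∑ l, m l * (y₁ (some l)).toNat : ℕ) : ℚ) := by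
      exact_mod_cast hcon
    rw [hsumcast] at h3
    have h4 : (q:ℚ) * z none = (y₁ none : ℚ) := hqz none
    have h5 : (1:ℚ) ≤ (y₁ none : ℚ) := by exact_mod_cast hy₁none
    have hqpos : (0:ℚ) < (q:ℚ) := by exact_mod_cast hq1
    nlinarith

lemma cap_iff {α : Type*} (s : Finset α) (f : α → ℕ) (τ : ℕ) :
    (τ ≤ ∑ a ∈ s, min (f a) τ) ↔ (τ ≤ ∑ a ∈ s, f a) := by
  constructor
  · intro h
    exact h.trans (Finset.sum_le_sum fun i _ => min_le_left _ _)
  · intro h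
    by_cases hex : ∃ a ∈ s, τ ≤ f a
    · obtain ⟨a, ha, hfa⟩ := hex
      calc τ = min (f a) τ := (min_eq_right hfa).symm
        _ ≤ ∑ a ∈ s, min (f a) τ :=
          Finset.single_le_sum (f := fun a => min (f a) τ)
            (fun i _ => Nat.zero_le _) ha
    · push_neg at hex
      rw [Finset.sum_congr rfl fun a ha => min_eq_left (Nat.le_of_lt (hex a ha))]
      exact h

end LocTemp

/-- for any strength function and temperature on a finite glue
alphabet of cardinality `u`, there are a locally equivalent strength function
and temperature with the temperature at most `2^(6u+6)`. -/
theorem exists_locally_equivalent_small_temperature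
    (Λ : Type) [Fintype Λ] (u : ℕ) (hu : Fintype.card Λ = u)
    (T : Finset (Fin 4 → Λ)) (g : Λ → ℕ) (τ : ℕ) (hτ : 1 ≤ τ) :
    ∃ (g' : Λ → ℕ) (τ' : ℕ), 1 ≤ τ' ∧ τ' ≤ 2 ^ (6 * u + 6) ∧
      ∀ t ∈ T, ∀ D : Finset (Fin 4),
        (τ' ≤ ∑ d ∈ D, g' (t d)) ↔ (τ ≤ ∑ d ∈ D, g (t d)) := by
  classical
  set gb : Λ → ℕ := fun l => min (g l) τ with hgbdef
  have hcap : ∀ l, gb l ≤ τ := fun l => min_le_right _ _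
  obtain ⟨g', q, hq1, hqb, hiff⟩ := LocTemp.main_aux gb τ hτ hcap
  refine ⟨g', q, hq1, ?_, ?_⟩
  · calc q ≤ 5 ^ (Fintype.card Λ + 1) := hqb
      _ ≤ 64 ^ (Fintype.card Λ + 1) := Nat.pow_le_pow_left (by norm_num) _
      _ = 2 ^ (6 * (Fintype.card Λ + 1)) := by rw [pow_mul]; norm_num
      _ = 2 ^ (6 * u + 6) := by rw [hu]; ring_nf
  · intro t ht D
    set m : Λ → ℕ := fun l => (D.filter (fun d => t d = l)).card with hmdef
    have hm4 : (∑ l, m l) ≤ 4 := by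
      have hfibcard := Finset.card_eq_sum_card_fiberwise
        (f := t) (s := D) (t := Finset.univ) (fun x _ => Finset.mem_univ _)
      calc ∑ l, m l = D.card := hfibcard.symm
        _ ≤ Fintype.card (Fin 4) := Finset.card_le_univ D
        _ = 4 := by simp
    have hfib : ∀ h : Λ → ℕ, ∑ d ∈ D, h (t d) = ∑ l, m l * h l := by
      intro h
      rw [← Finset.sum_fiberwise_of_maps_to (g := t) (t := Finset.univ)
        (fun x _ => Finset.mem_univ (t x)) (fun d => h (t d))]
      refine Finset.sum_congr rfl fun l _ => ?_
      calc ∑ d ∈ D.filter (fun d => t d = l), h (t d)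
          = ∑ d ∈ D.filter (fun d => t d = l), h l := by
            refine Finset.sum_congr rfl fun d hd => ?_
            rw [(Finset.mem_filter.mp hd).2]
        _ = m l * h l := by
            rw [Finset.sum_const, smul_eq_mul, hmdef]
    have hcapiff : (τ ≤ ∑ d ∈ D, gb (t d)) ↔ (τ ≤ ∑ d ∈ D, g (t d)) :=
      LocTemp.cap_iff D (fun d => g (t d)) τ
    rw [hfib g', hiff m hm4, ← hfib gb]
    exact hcapiff
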